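/- There exists θ₀ ∈ (π/2, π) such that for every θ ∈ (π/2, θ₀) there are constants c₁, c₂ > 0, independent of τ and z, with the property: for every time step τ > 0 and every z ∈ D(τ,θ) one has c₁|z| ≤ |δ_τ(e^{−zτ})| ≤ c₂|z|, where δ_τ is the BDF3 generating symbol. -/

import Mathlib

open Complex Set

/-- The BDF3 generating symbol `δ_τ(ξ) = τ⁻¹(11/6 − 3ξ + (3/2)ξ² − (1/3)ξ³)`. -/
noncomputable def bdf3 (τ : ℝ) (ξ : ℂ) : ℂ :=
  (τ : ℂ)⁻¹ * (11 / 6 - 3 * ξ + (3 / 2) * ξ ^ 2 - (1 / 3) * ξ ^ 3)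

/-- The region `D(τ,θ)`: nonzero `z` with either `|arg z| = θ` and `|Im z| ≤ π/τ`,
or `|z| ≤ 1/τ` and `|arg z| ≤ θ`. -/
def Dset (τ θ : ℝ) : Set ℂ :=
  {z : ℂ | z ≠ 0 ∧
    ((|z.arg| = θ ∧ |z.im| ≤ Real.pi / τ) ∨ (‖z‖ ≤ 1 / τ ∧ |z.arg| ≤ θ))}

/-- The rescaled symbol `f(w) = δ₁(e^{-w})`. -/
noncomputable def fB (w : ℂ) : ℂ :=
  11 / 6 - 3 * Complex.exp (-w) + (3 / 2) * Complex.exp (-w) ^ 2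
    - (1 / 3) * Complex.exp (-w) ^ 3

lemma fB_cont : Continuous fB := by
  unfold fB; fun_prop

lemma fB_zero : fB 0 = 0 := by
  simp [fB]; norm_num

lemma fB_hasDeriv : HasDerivAt fB 1 0 := by
  have h1 : HasDerivAt (fun w : ℂ => -w) (-1) 0 := (hasDerivAt_id (0:ℂ)).neg
  have he : HasDerivAt (fun w : ℂ => Complex.exp (-w)) (-1) 0 := by
    simpa using h1.cexp
  have h2 := he.pow 2
  have h3 := he.pow 3
  have h := ((((hasDerivAt_const (0:ℂ) ((11:ℂ)/6)).sub (he.const_mul (3:ℂ))).add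
      (h2.const_mul ((3:ℂ)/2))).sub (h3.const_mul ((1:ℂ)/3)))
  have h' : HasDerivAt fB (0 - 3 * (-1:ℂ) +
      3 / 2 * (((2:ℕ):ℂ) * Complex.exp (-(0:ℂ)) ^ (2 - 1) * -1) -
      1 / 3 * (((3:ℕ):ℂ) * Complex.exp (-(0:ℂ)) ^ (3 - 1) * -1)) 0 := h
  have hval : (0 - 3 * (-1:ℂ) +
      3 / 2 * (((2:ℕ):ℂ) * Complex.exp (-(0:ℂ)) ^ (2 - 1) * -1) -
      1 / 3 * (((3:ℕ):ℂ) * Complex.exp (-(0:ℂ)) ^ (3 - 1) * -1)) = 1 := by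
    norm_num [Complex.exp_zero]
  rwa [hval] at h'

/-- `f(w)/w` extended by its limit `1` at `0`. -/
noncomputable def gB (w : ℂ) : ℂ := if w = 0 then 1 else fB w / w

lemma gB_zero : gB 0 = 1 := by simp [gB]

lemma gB_cont : Continuous gB := by
  rw [continuous_iff_continuousAt]
  intro x
  by_cases hx : x = 0
  · subst hx
    have h := fB_hasDeriv
    rw [hasDerivAt_iff_tendsto_slope] at h
    have hs : Filter.Tendsto gB (nhdsWithin 0 {(0:ℂ)}ᶜ) (nhds 1) := by
      apply h.congr'
      filter_upwards [self_mem_nhdsWithin] with w hw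
      have hw' : w ≠ 0 := hw
      simp [slope_def_field, gB, hw', fB_zero]
    have hp : Filter.Tendsto gB (pure (0:ℂ)) (nhds 1) := by
      have := tendsto_pure_nhds gB 0
      rwa [gB_zero] at this
    unfold ContinuousAt
    rw [gB_zero, ← nhdsNE_sup_pure (0:ℂ)]
    exact hs.sup hp
  · have hc : ContinuousAt (fun w => fB w / w) x :=
      (fB_cont.continuousAt).div continuousAt_id hx
    apply hc.congr
    filter_upwards [isOpen_ne.mem_nhds hx] with w hw
    simp [gB, hw]

lemma fB_ne_zero {w : ℂ} (hw : w ≠ 0) (hre : -(1/2) ≤ w.re) (him : |w.im| ≤ Real.pi) :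
    fB w ≠ 0 := by
  intro h0
  set ξ := Complex.exp (-w) with hξ
  have hfac : (ξ - 1) * (ξ ^ 2 - 7/2 * ξ + 11/2) = 0 := by
    have hh : (ξ - 1) * (ξ ^ 2 - 7/2 * ξ + 11/2) = (-3) * fB w := by
      rw [fB, ← hξ]; ring
    rw [hh, h0, mul_zero]
  rcases mul_eq_zero.1 hfac with h1 | h2
  · -- ξ = 1, so exp(-w) = 1
    have hξ1 : Complex.exp (-w) = 1 := by rw [← hξ]; linear_combination h1
    obtain ⟨n, hn⟩ := Complex.exp_eq_one_iff.1 hξ1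
    have hwim : w.im = -(n * (2 * Real.pi)) := by
      have := congrArg Complex.im hn
      simp at this
      linarith
    have hn0 : n = 0 := by
      by_contra hne
      have h1n : (1:ℝ) ≤ |(n:ℝ)| := by
        have := Int.one_le_abs hne
        exact_mod_cast this
      have : |w.im| = |(n:ℝ)| * (2 * Real.pi) := by
        rw [hwim, abs_neg, abs_mul, abs_of_pos (by positivity : (0:ℝ) < 2 * Real.pi)]
      nlinarith [Real.pi_pos]
    rw [hn0] at hn
    simp at hn
    exact hw hn
  · -- quadratic root: |ξ|² = 11/2
    have h2' : 2*ξ^2 - 7*ξ + 11 = 0 := by linear_combination 2*h2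
    have hx : 2*(ξ.re*ξ.re - ξ.im*ξ.im) - 7*ξ.re + 11 = 0 := by
      have := congrArg Complex.re h2'
      simpa [pow_two, Complex.mul_re, Complex.mul_im] using this
    have hy : ξ.im * (4*ξ.re - 7) = 0 := by
      have := congrArg Complex.im h2'
      simp [pow_two, Complex.mul_re, Complex.mul_im] at this
      linarith
    have hnorm : ξ.re ^ 2 + ξ.im ^ 2 = 11/2 := by
      rcases mul_eq_zero.1 hy with h | h
      · nlinarith
      · have hxe : ξ.re = 7/4 := by linarith
        rw [hxe] at hx ⊢
        nlinarith
    have habs : Real.exp (-w.re) ^ 2 = 11/2 := by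
      have h1 : ‖ξ‖ = Real.exp (-w.re) := by
        rw [hξ, Complex.norm_exp]; simp
      have h2 : ‖ξ‖ ^ 2 = ξ.re ^ 2 + ξ.im ^ 2 := by
        rw [Complex.sq_norm, Complex.normSq_apply]; ring
      rw [← h1, h2, hnorm]
    have hle : Real.exp (-w.re) ≤ Real.exp (1/2) := Real.exp_le_exp.2 (by linarith)
    have hee : Real.exp (1/2) * Real.exp (1/2) = Real.exp 1 := by
      rw [← Real.exp_add]; norm_num
    have := Real.exp_one_lt_d9
    nlinarith [Real.exp_pos (-w.re)]

/-- The compact region containing all rescaled `w = zτ`. -/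
def Kset : Set ℂ := {w : ℂ | ‖w‖ ≤ 5 ∧ -(1/2) ≤ w.re ∧ |w.im| ≤ Real.pi}

lemma Kset_compact : IsCompact Kset := by
  have h1 : Kset = Metric.closedBall (0:ℂ) 5 ∩
      {w : ℂ | -(1/2) ≤ w.re ∧ |w.im| ≤ Real.pi} := by
    ext w
    simp [Kset, Metric.mem_closedBall, Complex.dist_eq]
  rw [h1]
  refine (isCompact_closedBall (0:ℂ) 5).inter_right (IsClosed.inter ?_ ?_)
  · exact isClosed_le continuous_const Complex.continuous_re
  · exact isClosed_le (Complex.continuous_im.abs) continuous_const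

lemma zero_mem_Kset : (0:ℂ) ∈ Kset := by
  simp [Kset, Real.pi_nonneg]

lemma gB_ne_zero {w : ℂ} (hw : w ∈ Kset) : gB w ≠ 0 := by
  by_cases h0 : w = 0
  · simp [gB, h0]
  · simp only [gB, if_neg h0]
    exact div_ne_zero (fB_ne_zero h0 hw.2.1 hw.2.2) h0

theorem bdf3_symbol_two_sided_bound :
    ∃ θ₀ ∈ Ioo (Real.pi / 2) Real.pi, ∀ θ ∈ Ioo (Real.pi / 2) θ₀,
      ∃ c₁ > (0 : ℝ), ∃ c₂ > (0 : ℝ),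
        ∀ τ : ℝ, 0 < τ → ∀ z ∈ Dset τ θ,
          c₁ * ‖z‖ ≤ ‖bdf3 τ (Complex.exp (-z * τ))‖ ∧
          ‖bdf3 τ (Complex.exp (-z * τ))‖ ≤ c₂ * ‖z‖ := by
  set θ₀ := Real.arccos (-(1/8)) with hθ₀def
  have hcosθ₀ : Real.cos θ₀ = -(1/8) := Real.cos_arccos (by norm_num) (by norm_num)
  have hθ₀mem : θ₀ ∈ Ioo (Real.pi / 2) Real.pi := by
    rw [hθ₀def, Real.arccos_eq_pi_div_two_sub_arcsin]
    constructor
    · have := Real.arcsin_lt_zero.2 (show -(1/8:ℝ) < 0 by norm_num)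
      linarith
    · have := Real.neg_pi_div_two_lt_arcsin.2 (show (-1:ℝ) < -(1/8) by norm_num)
      linarith
  refine ⟨θ₀, hθ₀mem, ?_⟩
  intro θ hθ
  -- basic bounds on cos θ and sin θ
  have hθpos : 0 < θ := lt_trans (by positivity) hθ.1
  have hθltpi : θ ≤ Real.pi := le_of_lt (lt_trans hθ.2 hθ₀mem.2)
  have hcosθgt : -(1/8) < Real.cos θ := by
    have := Real.cos_lt_cos_of_nonneg_of_le_pi (le_of_lt hθpos)
      (Real.arccos_le_pi _) hθ.2
    rwa [hcosθ₀] at this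
  have hcosθlt : Real.cos θ < 0 := by
    have := Real.cos_lt_cos_of_nonneg_of_le_pi (by positivity) hθltpi hθ.1
    rwa [Real.cos_pi_div_two] at this
  have hsinθ : (99/100 : ℝ) ≤ Real.sin θ := by
    have h1 := Real.sin_sq_add_cos_sq θ
    have h2 := Real.sin_nonneg_of_nonneg_of_le_pi (le_of_lt hθpos) hθltpi
    nlinarith
  -- extremal values of |g| on K
  obtain ⟨w₁, hw₁K, hmin⟩ := Kset_compact.exists_isMinOn ⟨0, zero_mem_Kset⟩
    ((continuous_norm.comp gB_cont).continuousOn)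
  obtain ⟨w₂, hw₂K, hmax⟩ := Kset_compact.exists_isMaxOn ⟨0, zero_mem_Kset⟩
    ((continuous_norm.comp gB_cont).continuousOn)
  refine ⟨‖gB w₁‖, norm_pos_iff.mpr (gB_ne_zero hw₁K),
         ‖gB w₂‖, norm_pos_iff.mpr (gB_ne_zero hw₂K), ?_⟩
  intro τ hτ z hz
  obtain ⟨hz0, hzcase⟩ := hz
  set w : ℂ := z * (τ:ℂ) with hwdef
  have hτ0 : (τ:ℂ) ≠ 0 := by exact_mod_cast hτ.ne'
  have hw0 : w ≠ 0 := mul_ne_zero hz0 hτ0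
  have habsw : ‖w‖ = ‖z‖ * τ := by
    rw [hwdef, norm_mul, Complex.norm_real, Real.norm_eq_abs, abs_of_pos hτ]
  have habswpos : 0 < ‖w‖ := norm_pos_iff.mpr hw0
  have hargw : w.arg = z.arg := by
    rw [hwdef, mul_comm]; exact Complex.arg_real_mul z hτ
  have himw : w.im = z.im * τ := by
    rw [hwdef]; simp [Complex.mul_im]
  have hrew : w.re = Real.cos w.arg * ‖w‖ := by
    rw [Complex.cos_arg hw0]; field_simp
  -- |sin (arg w)| = sin |arg w|
  have hsinabs : |Real.sin w.arg| = Real.sin |w.arg| := by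
    rcases abs_cases w.arg with ⟨h, hpos⟩ | ⟨h, hneg⟩
    · rw [h, _root_.abs_of_nonneg (Real.sin_nonneg_of_nonneg_of_le_pi hpos (Complex.arg_le_pi w))]
    · rw [h, Real.sin_neg, abs_of_nonpos]
      have : Real.sin (-w.arg) ≥ 0 :=
        Real.sin_nonneg_of_nonneg_of_le_pi (by linarith)
          (by linarith [Complex.neg_pi_lt_arg w])
      linarith [Real.sin_neg w.arg]
  have himabs : |w.im| = |Real.sin w.arg| * ‖w‖ := by
    have := Complex.sin_arg w
    rw [this, abs_div, abs_of_pos habswpos]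
    field_simp
  -- show w ∈ Kset
  have hπlt : Real.pi < 3.15 := Real.pi_lt_d2
  have hwK : w ∈ Kset := by
    rcases hzcase with ⟨hargz, himz⟩ | ⟨habsz, hargz⟩
    · -- ray case
      have hargwabs : |w.arg| = θ := by rw [hargw]; exact hargz
      have himwle : |w.im| ≤ Real.pi := by
        rw [himw, abs_mul, abs_of_pos hτ]
        calc |z.im| * τ ≤ (Real.pi / τ) * τ := by
              exact mul_le_mul_of_nonneg_right himz (le_of_lt hτ)
          _ = Real.pi := by field_simp
      have hsin_eq : |Real.sin w.arg| = Real.sin θ := by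
        rw [hsinabs, hargwabs]
      have habswle : ‖w‖ * Real.sin θ ≤ Real.pi := by
        rw [← hsin_eq]
        calc ‖w‖ * |Real.sin w.arg| = |w.im| := by rw [himabs]; ring
          _ ≤ Real.pi := himwle
      have habsw5 : ‖w‖ ≤ 5 := by nlinarith
      have hcosw : -(1/8) ≤ Real.cos w.arg := by
        rw [← Real.cos_abs, hargwabs]; linarith
      refine ⟨habsw5, ?_, himwle⟩
      rw [hrew]
      nlinarith
    · -- disk case
      have habsw1 : ‖w‖ ≤ 1 := by
        rw [habsw]
        calc ‖z‖ * τ ≤ (1/τ) * τ := by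
              exact mul_le_mul_of_nonneg_right habsz (le_of_lt hτ)
          _ = 1 := by field_simp
      have himwle : |w.im| ≤ Real.pi := by
        have := Complex.abs_im_le_norm w
        linarith [Real.pi_gt_three]
      have hcosw : -(1/8) ≤ Real.cos w.arg := by
        rw [← Real.cos_abs]
        have hc : Real.cos θ ≤ Real.cos |w.arg| :=
          Real.cos_le_cos_of_nonneg_of_le_pi (abs_nonneg _) hθltpi
            (by rw [hargw]; exact hargz)
        linarith
      refine ⟨by linarith, ?_, himwle⟩
      rw [hrew]
      nlinarith [norm_nonneg w]
  -- relate bdf3 to fB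
  have hkey : bdf3 τ (Complex.exp (-z * τ)) = (↑τ)⁻¹ * fB w := by
    rw [bdf3, fB, hwdef]
    congr 3 <;> rw [show -z * (τ:ℂ) = -(z * τ) by ring]
  have hfw : fB w = gB w * w := by
    rw [gB, if_neg hw0]; field_simp
  have habs_bdf : ‖bdf3 τ (Complex.exp (-z * τ))‖
      = ‖gB w‖ * ‖z‖ := by
    rw [hkey, hfw, norm_mul, norm_mul, norm_inv, Complex.norm_real, Real.norm_eq_abs, abs_of_pos hτ, habsw]
    field_simp
  rw [habs_bdf]
  constructor
  · exact mul_le_mul_of_nonneg_right (hmin hwK) (norm_nonneg z)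
  · exact mul_le_mul_of_nonneg_right (hmax hwK) (norm_nonneg z)
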